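/- For every integer n ≥ 2, the following identity of polynomials in t with rational coefficients holds: ∑_{σ ∈ Π_{n−1}} μ(σ) ∏_{A ∈ σ} (t + n − 2 + min A) = (t + n − 1)^{n−1}, the sum being over all set partitions σ of {1,…,n−1}. (Both sides equal the factorial polynomial of the Shi board S_{0,n}, and (−1)^{n−1} times the characteristic polynomial of the extended Shi arrangement evaluated at 1−t.) -/

import Mathlib

open Polynomial

/-- The Möbius function value `μ(0̂, σ)` of a set partition `σ` in the
partition lattice: `∏_{A ∈ σ} (-1)^{|A|-1} (|A|-1)!`. -/
def partitionMu {m : ℕ} (σ : Finpartition (Finset.univ : Finset (Fin m))) : ℚ :=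
  ∏ A ∈ σ.parts, (-1 : ℚ) ^ (A.card - 1) * ((A.card - 1).factorial : ℚ)

/-- The smallest element of a (nonempty) block of a set partition of
`{1,…,m}`, as a 1-based label. -/
def blockMin {m : ℕ} (σ : Finpartition (Finset.univ : Finset (Fin m)))
    (A : {A // A ∈ σ.parts}) : ℕ :=
  (A.1.min' (σ.nonempty_of_mem_parts A.2)).1 + 1

namespace ShiAux

open Finset

set_option linter.unusedSectionVars false

variable {α : Type*} [LinearOrder α] [DecidableEq α] {R : Type*} [CommRing R]
variable {a : α} {s s' : Finset α}

/-- The weight of a block: `(-1)^{|A|-1} (|A|-1)! · x(min A)`. -/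
noncomputable def wgt (x : α → R) (A : Finset α) : R :=
  (-1 : R) ^ (A.card - 1) * ((A.card - 1).factorial : R) *
    (if h : A.Nonempty then x (A.min' h) else 1)

lemma wgt_singleton (x : α → R) (a : α) : wgt x {a} = x a := by
  simp [wgt]

lemma wgt_insert (x : α → R) (ha : a ∉ s') {A : Finset α} (hA : A.Nonempty)
    (hAs : A ⊆ s') (hlt : ∀ b ∈ s', b < a) :
    wgt x (insert a A) = -(A.card : R) * wgt x A := by
  have hc : 0 < A.card := Finset.card_pos.mpr hA
  have haA : a ∉ A := fun h => ha (hAs h)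
  have hcard : (insert a A).card = A.card + 1 := Finset.card_insert_of_notMem haA
  have hne : (insert a A).Nonempty := Finset.insert_nonempty _ _
  have hmin : (insert a A).min' hne = A.min' hA := by
    refine le_antisymm (Finset.min'_le _ _ (Finset.mem_insert_of_mem (A.min'_mem hA)))
      (Finset.le_min' _ _ _ fun b hb => ?_)
    rcases Finset.mem_insert.mp hb with rfl | hb
    · exact le_of_lt (hlt _ (hAs (A.min'_mem hA)))
    · exact Finset.min'_le _ _ hb
  obtain ⟨k, hk⟩ : ∃ k, A.card = k + 1 := ⟨A.card - 1, by omega⟩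
  rw [wgt, wgt, dif_pos hne, dif_pos hA, hmin, hcard, hk]
  simp only [Nat.add_sub_cancel, Nat.factorial_succ, pow_succ]
  push_cast
  ring

lemma part_not_mem (σ : Finpartition s') (ha : a ∉ s') {A : Finset α}
    (hA : A ∈ σ.parts) : a ∉ A :=
  fun h => ha (σ.le hA h)

lemma not_subset_singleton {C : Finset α} (hne : C.Nonempty) (hCa : a ∉ C) :
    ¬ C ⊆ {a} := by
  intro hsub
  obtain ⟨b, hb⟩ := hne
  have := hsub hb
  rw [Finset.mem_singleton] at this
  exact hCa (this ▸ hb)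

lemma part_not_subset (σ : Finpartition s') (ha : a ∉ s') {A : Finset α}
    (hA : A ∈ σ.parts) : ¬ A ⊆ {a} :=
  not_subset_singleton (σ.nonempty_of_mem_parts hA) (part_not_mem σ ha hA)

/-- Add `a` to a partition of `s'` as a new singleton block. -/
def addSingleton (ha : a ∉ s') (hins : insert a s' = s) (σ : Finpartition s') :
    Finpartition s :=
  σ.extend (b := {a}) (by simp)
    (Finset.disjoint_singleton_right.mpr ha)
    (by rw [Finset.sup_eq_union, Finset.union_comm, ← Finset.insert_eq]; exact hins)

lemma addSingleton_parts (ha : a ∉ s') (hins : insert a s' = s) (σ : Finpartition s') :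
    (addSingleton ha hins σ).parts = insert {a} σ.parts :=
  Finpartition.extend_parts _ _ _ _

/-- Add `a` to a given block `A` of a partition of `s'`. -/
def addToBlock (ha : a ∉ s') (hins : insert a s' = s) (σ : Finpartition s')
    (A : Finset α) (hA : A ∈ σ.parts) : Finpartition s where
  parts := insert (insert a A) (σ.parts.erase A)
  supIndep := by
    rw [Finset.supIndep_iff_pairwiseDisjoint, Finset.coe_insert]
    refine Set.PairwiseDisjoint.insert ?_ ?_
    · exact (Finset.supIndep_iff_pairwiseDisjoint.mp σ.supIndep).subset
        (by rw [Finset.coe_subset]; exact Finset.erase_subset _ _)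
    · intro B hB hne
      rw [Finset.mem_coe] at hB
      have hB' : B ∈ σ.parts := Finset.mem_of_mem_erase hB
      have hBA : B ≠ A := Finset.ne_of_mem_erase hB
      simp only [id]
      rw [Finset.disjoint_insert_left]
      exact ⟨part_not_mem σ ha hB', σ.disjoint hA hB' hBA.symm⟩
  sup_parts := by
    have h1 : σ.parts.sup id = s' := σ.sup_parts
    rw [← Finset.insert_erase hA, Finset.sup_insert] at h1
    rw [Finset.sup_insert]
    simp only [id_eq] at h1 ⊢
    rw [Finset.sup_eq_union] at h1 ⊢
    rw [Finset.insert_union, h1, hins]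
  bot_notMem := by
    simp only [Finset.bot_eq_empty, Finset.mem_insert]
    rintro (h | h)
    · exact (Finset.insert_ne_empty a A) h.symm
    · exact σ.bot_notMem (by simpa using Finset.mem_of_mem_erase h)

lemma addToBlock_parts (ha : a ∉ s') (hins : insert a s' = s) (σ : Finpartition s')
    (A : Finset α) (hA : A ∈ σ.parts) :
    (addToBlock ha hins σ A hA).parts = insert (insert a A) (σ.parts.erase A) := rfl

/-- Remove `a` from a partition of `s`, giving a partition of `s'`. -/
def restrictErase (ha : a ∉ s') (hins : insert a s' = s) (τ : Finpartition s) :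
    Finpartition s' :=
  (τ.avoid {a}).copy
    (by rw [Finset.sdiff_singleton_eq_erase, ← hins, Finset.erase_insert ha])

lemma mem_restrictErase {ha : a ∉ s'} {hins : insert a s' = s} {τ : Finpartition s}
    {B : Finset α} :
    B ∈ (restrictErase ha hins τ).parts ↔
      ∃ d ∈ τ.parts, ¬ d ⊆ {a} ∧ d.erase a = B := by
  rw [restrictErase, Finpartition.copy_parts, Finpartition.mem_avoid]
  simp only [Finset.sdiff_singleton_eq_erase, Finset.le_iff_subset]

lemma restrictErase_addSingleton (ha : a ∉ s') (hins : insert a s' = s)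
    (σ : Finpartition s') :
    restrictErase ha hins (addSingleton ha hins σ) = σ := by
  apply Finpartition.ext
  ext B
  rw [mem_restrictErase]
  constructor
  · rintro ⟨d, hd, hd1, rfl⟩
    rw [addSingleton_parts, Finset.mem_insert] at hd
    rcases hd with rfl | hd
    · exact absurd (Finset.Subset.refl _) hd1
    · rwa [Finset.erase_eq_of_notMem (part_not_mem σ ha hd)]
  · intro hB
    exact ⟨B, by rw [addSingleton_parts]; exact Finset.mem_insert_of_mem hB,
      part_not_subset σ ha hB, Finset.erase_eq_of_notMem (part_not_mem σ ha hB)⟩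

lemma restrictErase_addToBlock (ha : a ∉ s') (hins : insert a s' = s)
    (σ : Finpartition s') (A : Finset α) (hA : A ∈ σ.parts) :
    restrictErase ha hins (addToBlock ha hins σ A hA) = σ := by
  apply Finpartition.ext
  ext B
  rw [mem_restrictErase]
  constructor
  · rintro ⟨d, hd, hd1, rfl⟩
    rw [addToBlock_parts, Finset.mem_insert] at hd
    rcases hd with rfl | hd
    · rwa [Finset.erase_insert (part_not_mem σ ha hA)]
    · rw [Finset.erase_eq_of_notMem (part_not_mem σ ha (Finset.mem_of_mem_erase hd))]
      exact Finset.mem_of_mem_erase hd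
  · intro hB
    by_cases hBA : B = A
    · subst hBA
      exact ⟨insert a B, by rw [addToBlock_parts]; exact Finset.mem_insert_self _ _,
        fun hsub => part_not_subset σ ha hB ((Finset.subset_insert a B).trans hsub),
        Finset.erase_insert (part_not_mem σ ha hB)⟩
    · exact ⟨B, by
        rw [addToBlock_parts]
        exact Finset.mem_insert_of_mem (Finset.mem_erase.mpr ⟨hBA, hB⟩),
        part_not_subset σ ha hB, Finset.erase_eq_of_notMem (part_not_mem σ ha hB)⟩

lemma singleton_mem_addSingleton (ha : a ∉ s') (hins : insert a s' = s)
    (σ : Finpartition s') : ({a} : Finset α) ∈ (addSingleton ha hins σ).parts := by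
  rw [addSingleton_parts]; exact Finset.mem_insert_self _ _

lemma singleton_not_mem_addToBlock (ha : a ∉ s') (hins : insert a s' = s)
    (σ : Finpartition s') (A : Finset α) (hA : A ∈ σ.parts) :
    ({a} : Finset α) ∉ (addToBlock ha hins σ A hA).parts := by
  rw [addToBlock_parts, Finset.mem_insert]
  rintro (h | h)
  · have : A ⊆ {a} := by rw [h]; exact Finset.subset_insert _ _
    exact part_not_subset σ ha hA this
  · exact part_not_mem σ ha (Finset.mem_of_mem_erase h) (Finset.mem_singleton_self a)

lemma insert_mem_addToBlock_eq (ha : a ∉ s') (hins : insert a s' = s)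
    (σ : Finpartition s') {A₁ A₂ : Finset α} (hA₁ : A₁ ∈ σ.parts) (hA₂ : A₂ ∈ σ.parts)
    (h : insert a A₁ ∈ (addToBlock ha hins σ A₂ hA₂).parts) : A₁ = A₂ := by
  rw [addToBlock_parts, Finset.mem_insert] at h
  rcases h with h | h
  · have := congrArg (fun t => Finset.erase t a) h
    simpa [Finset.erase_insert (part_not_mem σ ha hA₁),
      Finset.erase_insert (part_not_mem σ ha hA₂)] using this
  · exact absurd (Finset.mem_insert_self a A₁)
      (part_not_mem σ ha (Finset.mem_of_mem_erase h))

lemma addBijective (ha : a ∉ s') (hins : insert a s' = s) (haS : a ∈ s)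
    (hlt : ∀ b ∈ s', b < a) :
    Function.Bijective
      (fun p : (Σ σ : Finpartition s', Option {A // A ∈ σ.parts}) =>
        p.2.elim (addSingleton ha hins p.1)
          (fun A => addToBlock ha hins p.1 A.1 A.2)) := by
  constructor
  · rintro ⟨σ₁, o₁⟩ ⟨σ₂, o₂⟩ h
    simp only at h
    rcases o₁ with _ | ⟨A₁, hA₁⟩ <;> rcases o₂ with _ | ⟨A₂, hA₂⟩ <;>
      simp only [Option.elim] at h
    · have hσ : σ₁ = σ₂ := by
        have := congrArg (restrictErase ha hins) h
        rwa [restrictErase_addSingleton, restrictErase_addSingleton] at this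
      subst hσ; rfl
    · exact absurd (h ▸ singleton_mem_addSingleton ha hins σ₁)
        (singleton_not_mem_addToBlock ha hins σ₂ A₂ hA₂)
    · exact absurd (h.symm ▸ singleton_mem_addSingleton ha hins σ₂)
        (singleton_not_mem_addToBlock ha hins σ₁ A₁ hA₁)
    · have hσ : σ₁ = σ₂ := by
        have := congrArg (restrictErase ha hins) h
        rwa [restrictErase_addToBlock, restrictErase_addToBlock] at this
      subst hσ
      have hmem : insert a A₁ ∈ (addToBlock ha hins σ₁ A₂ hA₂).parts := by
        rw [← h, addToBlock_parts]
        exact Finset.mem_insert_self _ _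
      have : A₁ = A₂ := insert_mem_addToBlock_eq ha hins σ₁ hA₁ hA₂ hmem
      subst this; rfl
  · intro τ
    have haB : a ∈ τ.part a := τ.mem_part haS
    have hBp : τ.part a ∈ τ.parts := τ.part_mem.mpr haS
    by_cases hB : τ.part a = {a}
    · refine ⟨⟨restrictErase ha hins τ, none⟩, ?_⟩
      simp only [Option.elim]
      apply Finpartition.ext
      rw [addSingleton_parts]
      ext C
      rw [Finset.mem_insert, mem_restrictErase]
      constructor
      · rintro (rfl | ⟨d, hd, hd1, rfl⟩)
        · rw [← hB]; exact hBp
        · have had : a ∉ d := by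
            intro had
            exact hd1 (by rw [← τ.part_eq_of_mem hd had, hB])
          rwa [Finset.erase_eq_of_notMem had]
      · intro hC
        by_cases hCa : a ∈ C
        · left; rw [← hB, τ.part_eq_of_mem hC hCa]
        · right
          exact ⟨C, hC, not_subset_singleton (τ.nonempty_of_mem_parts hC) hCa,
            Finset.erase_eq_of_notMem hCa⟩
    · have hAne : ((τ.part a).erase a).Nonempty := by
        rw [Finset.nonempty_iff_ne_empty]
        intro h
        apply hB
        rw [← Finset.insert_erase haB, h]
        simp
      have hA : (τ.part a).erase a ∈ (restrictErase ha hins τ).parts := by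
        rw [mem_restrictErase]
        exact ⟨τ.part a, hBp,
          fun hsub => hB ((Finset.Nonempty.subset_singleton_iff ⟨a, haB⟩).mp hsub), rfl⟩
      refine ⟨⟨restrictErase ha hins τ, some ⟨(τ.part a).erase a, hA⟩⟩, ?_⟩
      simp only [Option.elim]
      apply Finpartition.ext
      rw [addToBlock_parts]
      have hiA : insert a ((τ.part a).erase a) = τ.part a := Finset.insert_erase haB
      ext C
      rw [Finset.mem_insert]
      constructor
      · rintro (rfl | hC)
        · rw [hiA]; exact hBp
        · rw [Finset.mem_erase, mem_restrictErase] at hC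
          obtain ⟨hCne, d, hd, hd1, rfl⟩ := hC
          have had : a ∉ d := by
            intro had
            exact hCne (by rw [τ.part_eq_of_mem hd had])
          rwa [Finset.erase_eq_of_notMem had]
      · intro hC
        by_cases hCa : a ∈ C
        · left; rw [hiA, τ.part_eq_of_mem hC hCa]
        · right
          rw [Finset.mem_erase, mem_restrictErase]
          refine ⟨?_, C, hC, not_subset_singleton (τ.nonempty_of_mem_parts hC) hCa,
            Finset.erase_eq_of_notMem hCa⟩
          intro hCA
          obtain ⟨b, hb⟩ := hAne
          rw [← hCA] at hb
          have : C = τ.part a :=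
            τ.eq_of_mem_parts hC hBp hb (Finset.erase_subset a _ (hCA ▸ hb))
          exact hCa (this ▸ haB)

/-- The key identity:
`∑_{σ ∈ Π(s)} ∏_{A ∈ σ} wgt A = ∏_{a ∈ s} (x a - #{b ∈ s | b < a})`. -/
lemma key (x : α → R) (s : Finset α) :
    ∑ σ : Finpartition s, ∏ A ∈ σ.parts, wgt x A
      = ∏ a ∈ s, (x a - (((s.filter (· < a)).card : ℕ) : R)) := by
  induction s using Finset.strongInduction with
  | _ s ih =>
  rcases s.eq_empty_or_nonempty with rfl | hs
  · haveI : Unique (Finpartition (∅ : Finset α)) :=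
      (Finset.bot_eq_empty (α := α)) ▸
        inferInstanceAs (Unique (Finpartition (⊥ : Finset α)))
    have h1 : ∀ σ : Finpartition (∅ : Finset α), σ.parts = ∅ := fun σ =>
      Finpartition.parts_eq_empty_iff.mpr Finset.bot_eq_empty.symm
    simp [h1, Finset.card_univ]
  · have haS : s.max' hs ∈ s := s.max'_mem hs
    set a := s.max' hs with ha_def
    set s' := s.erase a with hs'_def
    have ha : a ∉ s' := Finset.notMem_erase _ _
    have hins : insert a s' = s := Finset.insert_erase haS
    have hss : s' ⊂ s := Finset.erase_ssubset haS
    have hlt : ∀ b ∈ s', b < a := fun b hb =>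
      lt_of_le_of_ne (s.le_max' b (Finset.mem_of_mem_erase hb))
        (Finset.ne_of_mem_erase hb)
    have step1 : ∑ σ : Finpartition s, ∏ A ∈ σ.parts, wgt x A
        = ∑ p : (Σ σ : Finpartition s', Option {A // A ∈ σ.parts}),
            ∏ A ∈ (p.2.elim (addSingleton ha hins p.1)
              (fun A => addToBlock ha hins p.1 A.1 A.2)).parts, wgt x A :=
      (Fintype.sum_bijective _ (addBijective ha hins haS hlt) _ _ fun p => rfl).symm
    rw [step1, ← Finset.univ_sigma_univ, Finset.sum_sigma]
    have inner : ∀ σ : Finpartition s',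
        (∑ o : Option {A // A ∈ σ.parts},
          ∏ A ∈ (o.elim (addSingleton ha hins σ)
            (fun A => addToBlock ha hins σ A.1 A.2)).parts, wgt x A)
        = (x a - ((s'.card : ℕ) : R)) * ∏ A ∈ σ.parts, wgt x A := by
      intro σ
      rw [Fintype.sum_option]
      simp only [Option.elim]
      have hnone : ∏ A ∈ (addSingleton ha hins σ).parts, wgt x A
          = x a * ∏ A ∈ σ.parts, wgt x A := by
        rw [addSingleton_parts, Finset.prod_insert
          (fun h => part_not_mem σ ha h (Finset.mem_singleton_self a)), wgt_singleton]
      have hsome : ∀ (A : Finset α) (hA : A ∈ σ.parts),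
          ∏ B ∈ (addToBlock ha hins σ A hA).parts, wgt x B
            = -(A.card : R) * ∏ B ∈ σ.parts, wgt x B := by
        intro A hA
        rw [addToBlock_parts, Finset.prod_insert
          (fun h => part_not_mem σ ha (Finset.mem_of_mem_erase h)
            (Finset.mem_insert_self a A))]
        have hrest : ∏ B ∈ σ.parts, wgt x B
            = wgt x A * ∏ B ∈ σ.parts.erase A, wgt x B := by
          rw [← Finset.prod_insert (Finset.notMem_erase A σ.parts),
            Finset.insert_erase hA]
        rw [hrest, wgt_insert x ha (σ.nonempty_of_mem_parts hA)
          (Finset.le_iff_subset.mp (σ.le hA)) hlt]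
        ring
      rw [hnone]
      have : ∑ A : {A // A ∈ σ.parts},
          ∏ B ∈ (addToBlock ha hins σ A.1 A.2).parts, wgt x B
          = ∑ A : {A // A ∈ σ.parts}, -(A.1.card : R) * ∏ B ∈ σ.parts, wgt x B := by
        exact Finset.sum_congr rfl fun A _ => hsome A.1 A.2
      rw [this, Finset.sum_coe_sort σ.parts
        (fun A => -(A.card : R) * ∏ B ∈ σ.parts, wgt x B), ← Finset.sum_mul]
      have hcards : ∑ A ∈ σ.parts, -(A.card : R) = -((s'.card : ℕ) : R) := by
        rw [Finset.sum_neg_distrib, neg_inj, ← Nat.cast_sum, σ.sum_card_parts]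
      rw [hcards]
      ring
    rw [Finset.sum_congr rfl (fun σ _ => inner σ), ← Finset.mul_sum, ih s' hss]
    have h₁ : s.filter (· < a) = s' := by
      ext b
      rw [Finset.mem_filter]
      constructor
      · rintro ⟨hb, hb2⟩
        rw [Finset.mem_erase]
        exact ⟨ne_of_lt hb2, hb⟩
      · intro hb
        exact ⟨Finset.mem_of_mem_erase hb, hlt b hb⟩
    have h₂ : ∀ b ∈ s', s.filter (· < b) = s'.filter (· < b) := by
      intro b hb
      ext c
      simp only [Finset.mem_filter]
      constructor
      · rintro ⟨hc, hc2⟩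
        refine ⟨Finset.mem_erase.mpr ⟨?_, hc⟩, hc2⟩
        rintro rfl
        exact absurd (hc2.trans (hlt b hb)) (lt_irrefl a)
      · rintro ⟨hc, hc2⟩
        exact ⟨Finset.mem_of_mem_erase hc, hc2⟩
    conv_rhs => rw [← hins]
    rw [Finset.prod_insert ha, hins, h₁]
    congr 1
    exact Finset.prod_congr rfl fun b hb => by rw [h₂ b hb]

end ShiAux

/-- as polynomials in `t` over `ℚ`,
`∑_{σ ∈ Π_{n-1}} μ(σ) ∏_{A ∈ σ} (t + n - 2 + min A) = (t + n - 1)^{n-1}`,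
the sum being over all set partitions of `{1,…,n-1}`. -/
theorem shi_characteristic_partition_sum (n : ℕ) (hn : 2 ≤ n) :
    ∑ σ : Finpartition (Finset.univ : Finset (Fin (n - 1))),
        C (partitionMu σ) *
          ∏ A ∈ σ.parts.attach, (X + C ((n : ℚ) - 2 + blockMin σ A)) =
      (X + C ((n : ℚ) - 1)) ^ (n - 1) := by
  classical
  set m := n - 1 with hm
  set x : Fin m → ℚ[X] := fun i => X + C ((n : ℚ) - 2 + ((i.1 + 1 : ℕ) : ℚ)) with hx
  have hterm : ∀ σ : Finpartition (Finset.univ : Finset (Fin m)),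
      C (partitionMu σ) * ∏ A ∈ σ.parts.attach, (X + C ((n : ℚ) - 2 + blockMin σ A))
        = ∏ A ∈ σ.parts, ShiAux.wgt x A := by
    intro σ
    have h1 : C (partitionMu σ)
        = ∏ A ∈ σ.parts, ((-1 : ℚ[X]) ^ (A.card - 1) * ((A.card - 1).factorial : ℚ[X])) := by
      rw [partitionMu, map_prod]
      exact Finset.prod_congr rfl fun A _ => by
        rw [map_mul, map_pow, map_neg, map_one]
        norm_cast
        simp
    have h2 : ∏ A ∈ σ.parts.attach, (X + C ((n : ℚ) - 2 + blockMin σ A))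
        = ∏ A ∈ σ.parts.attach,
            (if h : A.1.Nonempty then x (A.1.min' h) else 1) := by
      refine Finset.prod_congr rfl fun A _ => ?_
      rw [dif_pos (σ.nonempty_of_mem_parts A.2), hx]
      simp only [blockMin]
    rw [h1, h2, Finset.prod_attach σ.parts
      (fun A => if h : A.Nonempty then x (A.min' h) else 1), ← Finset.prod_mul_distrib]
    exact Finset.prod_congr rfl fun A _ => rfl
  rw [Finset.sum_congr rfl fun σ _ => hterm σ, ShiAux.key x Finset.univ]
  have hfac : ∀ i : Fin m,
      x i - (((Finset.univ.filter (· < i)).card : ℕ) : ℚ[X]) = X + C ((n : ℚ) - 1) := by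
    intro i
    have hcard : (Finset.univ.filter (· < i)).card = i.1 := by
      have : Finset.univ.filter (· < i) = Finset.Iio i := by ext j; simp
      rw [this, Fin.card_Iio]
    rw [hcard, hx]
    have h3 : ((i.1 : ℕ) : ℚ[X]) = C ((i.1 : ℕ) : ℚ) := by simp
    simp only []
    rw [h3, add_sub_assoc, ← C_sub]
    congr 2
    push_cast
    ring
  calc ∏ i : Fin m, (x i - (((Finset.univ.filter (· < i)).card : ℕ) : ℚ[X]))
      = ∏ _i : Fin m, (X + C ((n : ℚ) - 1)) := Finset.prod_congr rfl fun i _ => hfac i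
    _ = (X + C ((n : ℚ) - 1)) ^ m := by
        rw [Finset.prod_const, Finset.card_univ, Fintype.card_fin]
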